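/- (Distributed noisy aggregation.) Let n ≥ 1, λ > 0, and let l₁, …, l_n ∈ ℝ be fixed values. For i = 1, …, n let G₁ᵢ and G₂ᵢ be 2n mutually independent random variables, each distributed according to the Gamma distribution with shape 1/n and scale λ, and set the perturbed value l̂ᵢ = lᵢ + G₁ᵢ − G₂ᵢ. Then the aggregate L̂ = ∑_{i=1}^n l̂ᵢ is distributed according to the Laplace distribution with scale λ shifted by L = ∑_{i=1}^n lᵢ, i.e., the law of L̂ has density x ↦ (1/(2λ))·exp(−|x − L|/λ) with respect to Lebesgue measure. -/

import Mathlib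

open MeasureTheory ProbabilityTheory
open scoped BigOperators



open Real Set
open scoped ENNReal

namespace DistributedNoisyAggregationAux

lemma map_add_of_indepFun {Ω : Type*} [MeasurableSpace Ω] {μ : Measure Ω} [IsProbabilityMeasure μ]
    {X Y : Ω → ℝ} (hX : Measurable X) (hY : Measurable Y) (h : IndepFun X Y μ) :
    Measure.map (fun ω => X ω + Y ω) μ = Measure.conv (Measure.map X μ) (Measure.map Y μ) := by
  rw [Measure.conv, ← (indepFun_iff_map_prod_eq_prod_map_map hX.aemeasurable hY.aemeasurable).1 h,
    Measure.map_map (by fun_prop) (by fun_prop)]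
  rfl

lemma conv_withDensity {f g : ℝ → ℝ≥0∞} (hf : Measurable f) (hg : Measurable g) :
    Measure.conv (volume.withDensity f) (volume.withDensity g) =
      volume.withDensity (fun x => ∫⁻ t, f t * g (x - t)) := by
  ext s hs
  rw [Measure.conv, Measure.map_apply (by fun_prop) hs, withDensity_apply _ hs,
    Measure.prod_apply (measurable_add hs)]
  have key : ∀ t : ℝ, (volume.withDensity g) (Prod.mk t ⁻¹' ((fun p : ℝ × ℝ => p.1 + p.2) ⁻¹' s))
      = ∫⁻ x, Set.indicator s (fun x => g (x - t)) x := by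
    intro t
    have hset : (Prod.mk t ⁻¹' ((fun p : ℝ × ℝ => p.1 + p.2) ⁻¹' s)) = (fun u => t + u) ⁻¹' s := rfl
    have hmeas : Measurable (Set.indicator s (fun x => g (x - t))) :=
      (hg.comp (measurable_id.sub_const t)).indicator hs
    rw [hset, withDensity_apply _ (hs.preimage (measurable_const_add t)),
      ← lintegral_indicator (hs.preimage (measurable_const_add t)) g,
      ← (measurePreserving_add_left volume t).lintegral_comp hmeas]
    congr 1
    ext u
    have huu : (t + u) - t = u := by ring
    by_cases h : t + u ∈ s
    · simp [Set.indicator_apply, Set.mem_preimage, h, Function.comp, huu]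
    · simp [Set.indicator_apply, Set.mem_preimage, h, Function.comp]
  simp_rw [key]
  have hind : (fun p : ℝ × ℝ => Set.indicator s (fun x => g (x - p.1)) p.2)
      = Set.indicator (Prod.snd ⁻¹' s) (fun p : ℝ × ℝ => g (p.2 - p.1)) := by
    ext p
    by_cases h : p.2 ∈ s <;> simp [Set.indicator_apply, h]
  have hmeasI : Measurable fun p : ℝ × ℝ => Set.indicator s (fun x => g (x - p.1)) p.2 := by
    rw [hind]
    exact (hg.comp (by fun_prop)).indicator (measurable_snd hs)
  have hmeasF : Measurable (Function.uncurry fun t x : ℝ =>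
      f t * Set.indicator s (fun x => g (x - t)) x) :=
    (hf.comp measurable_fst).mul hmeasI
  rw [lintegral_withDensity_eq_lintegral_mul _ hf
    (Measurable.lintegral_prod_right (f := fun t x : ℝ => Set.indicator s (fun x => g (x - t)) x)
      hmeasI)]
  simp only [Pi.mul_apply]
  have step : ∀ t : ℝ, f t * ∫⁻ x, Set.indicator s (fun x => g (x - t)) x
      = ∫⁻ x, f t * Set.indicator s (fun x => g (x - t)) x := by
    intro t
    have hm : Measurable (fun x : ℝ => s.indicator (fun x => g (x - t)) x) :=
      Measurable.indicator (hg.comp (measurable_id.sub_const t)) hs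
    rw [lintegral_const_mul _ hm]
  simp_rw [step]
  rw [lintegral_lintegral_swap hmeasF.aemeasurable]
  rw [← lintegral_indicator hs]
  congr 1
  ext x
  by_cases h : x ∈ s
  · simp only [Set.indicator_of_mem h]
  · simp [Set.indicator_of_notMem h]

lemma realBetaScaled {a b x : ℝ} (ha : 0 < a) (hb : 0 < b) (hx : 0 < x) :
    ∫ t in (0)..x, t ^ (a - 1) * (x - t) ^ (b - 1) =
      x ^ (a + b - 1) * (Real.Gamma a * Real.Gamma b / Real.Gamma (a + b)) := by
  have hB : Complex.betaIntegral (a : ℂ) (b : ℂ) =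
      ((Real.Gamma a * Real.Gamma b / Real.Gamma (a + b) : ℝ) : ℂ) := by
    have h2 := Complex.Gamma_mul_Gamma_eq_betaIntegral
      (s := (a : ℂ)) (t := (b : ℂ)) (by simpa using ha) (by simpa using hb)
    have hne : Complex.Gamma ((a : ℂ) + (b : ℂ)) ≠ 0 := by
      rw [← Complex.ofReal_add, Complex.Gamma_ofReal]
      exact_mod_cast (Real.Gamma_pos_of_pos (by linarith)).ne'
    have hne' : ((Real.Gamma (a + b) : ℝ) : ℂ) ≠ 0 := by
      exact_mod_cast (Real.Gamma_pos_of_pos (by linarith : (0:ℝ) < a + b)).ne'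
    simp only [← Complex.ofReal_add, Complex.Gamma_ofReal] at h2
    push_cast
    rw [eq_div_iff hne']
    linear_combination -h2
  have h1 := Complex.betaIntegral_scaled (a : ℂ) (b : ℂ) hx
  have hL : ((∫ t in (0)..x, t ^ (a - 1) * (x - t) ^ (b - 1) : ℝ) : ℂ) =
      ∫ t in (0)..x, (t : ℂ) ^ ((a : ℂ) - 1) * ((x : ℂ) - (t : ℂ)) ^ ((b : ℂ) - 1) := by
    rw [← intervalIntegral.integral_ofReal]
    rw [intervalIntegral.integral_of_le hx.le, intervalIntegral.integral_of_le hx.le]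
    refine setIntegral_congr_fun measurableSet_Ioc fun t ht => ?_
    have h0t : (0:ℝ) ≤ t := ht.1.le
    have hxt : (0:ℝ) ≤ x - t := by linarith [ht.2]
    push_cast
    rw [Complex.ofReal_cpow h0t, Complex.ofReal_cpow hxt]
    push_cast
    ring
  have := h1
  rw [← hL] at this
  have hR : ((x : ℂ)) ^ ((a:ℂ) + (b:ℂ) - 1) = ((x ^ (a + b - 1) : ℝ) : ℂ) := by
    rw [Complex.ofReal_cpow hx.le]
    push_cast
    ring_nf
  rw [hR, hB, ← Complex.ofReal_mul] at this
  exact_mod_cast this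

lemma betaIntegrable {a b x : ℝ} (ha : 0 < a) (hb : 0 < b) (hx : 0 < x) :
    IntervalIntegrable (fun t => t ^ (a - 1) * (x - t) ^ (b - 1)) volume 0 x := by
  have h1 : IntervalIntegrable (fun t => t ^ (a - 1) * (x - t) ^ (b - 1)) volume 0 (x / 2) := by
    apply IntervalIntegrable.mul_continuousOn
    · exact intervalIntegral.intervalIntegrable_rpow' (by linarith)
    · apply ContinuousOn.rpow_const (by fun_prop)
      intro t ht
      rw [uIcc_of_le (by linarith)] at ht
      exact Or.inl (by simp only [mem_Icc] at ht; intro h; linarith [ht.2])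
  have h2 : IntervalIntegrable (fun t => t ^ (a - 1) * (x - t) ^ (b - 1)) volume (x / 2) x := by
    apply IntervalIntegrable.continuousOn_mul
    · have h := (intervalIntegral.intervalIntegrable_rpow'
        (a := 0) (b := x / 2) (r := b - 1) (by linarith)).comp_sub_left x
      rw [sub_zero, show x - x / 2 = x / 2 by ring] at h
      exact h.symm
    · apply ContinuousOn.rpow_const (by fun_prop)
      intro t ht
      rw [uIcc_of_le (by linarith)] at ht
      exact Or.inl (by simp only [mem_Icc] at ht; intro h; linarith [ht.1])
  exact h1.trans h2

lemma gammaPDF_conv {a b r : ℝ} (ha : 0 < a) (hb : 0 < b) (hr : 0 < r) {x : ℝ} (hx : x ≠ 0) :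
    ∫⁻ t, gammaPDF a r t * gammaPDF b r (x - t) = gammaPDF (a + b) r x := by
  have hGa := Real.Gamma_pos_of_pos ha
  have hGb := Real.Gamma_pos_of_pos hb
  rcases hx.lt_or_gt with hneg | hpos
  · have hzero : ∀ t, gammaPDF a r t * gammaPDF b r (x - t) = 0 := by
      intro t
      rcases lt_or_ge t 0 with h | h
      · rw [gammaPDF_of_neg h, zero_mul]
      · rw [gammaPDF_of_neg (by linarith : x - t < 0), mul_zero]
    simp [hzero, gammaPDF_of_neg hneg]
  · set K : ℝ := r ^ a * r ^ b / (Real.Gamma a * Real.Gamma b) * Real.exp (-(r * x)) with hK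
    have hKnn : 0 ≤ K := by positivity
    have step1 : ∫⁻ t, gammaPDF a r t * gammaPDF b r (x - t)
        = ∫⁻ t in Ioo 0 x, gammaPDF a r t * gammaPDF b r (x - t) := by
      rw [← lintegral_indicator measurableSet_Ioo]
      apply lintegral_congr_ae
      have h0 : ∀ᵐ t : ℝ ∂volume, t ∉ ({0, x} : Set ℝ) := by
        rw [← measure_eq_zero_iff_ae_notMem]
        exact Set.Countable.measure_zero (by simp) volume
      filter_upwards [h0] with t ht
      by_cases hmem : t ∈ Ioo 0 x
      · rw [Set.indicator_of_mem hmem]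
      · rw [Set.indicator_of_notMem hmem]
        simp only [Set.mem_insert_iff, Set.mem_singleton_iff, not_or] at ht
        rw [Set.mem_Ioo, not_and_or] at hmem
        rcases hmem with h | h
        · rw [gammaPDF_of_neg (lt_of_le_of_ne (not_lt.mp h) ht.1), zero_mul]
        · have h2 : x - t < 0 := by
            rcases (not_lt.mp h).lt_or_eq with h' | h'
            · linarith
            · exact absurd h'.symm ht.2
          rw [gammaPDF_of_neg h2, mul_zero]
    have hre : ∀ t ∈ Ioo (0:ℝ) x, gammaPDF a r t * gammaPDF b r (x - t)
        = ENNReal.ofReal (K * (t ^ (a - 1) * (x - t) ^ (b - 1))) := by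
      intro t ht
      have h1 : (0:ℝ) ≤ t := ht.1.le
      have h2 : (0:ℝ) ≤ x - t := by linarith [ht.2]
      rw [gammaPDF_of_nonneg h1, gammaPDF_of_nonneg h2, ← ENNReal.ofReal_mul
        (by have := Real.rpow_nonneg h1 (a-1); positivity)]
      congr 1
      rw [hK, show -(r * x) = -(r * t) + -(r * (x - t)) by ring, Real.exp_add]
      ring
    rw [step1, setLIntegral_congr_fun measurableSet_Ioo hre]
    have hint : IntegrableOn (fun t => t ^ (a - 1) * (x - t) ^ (b - 1)) (Ioo 0 x) volume :=
      (intervalIntegrable_iff_integrableOn_Ioo_of_le hpos.le).mp (betaIntegrable ha hb hpos)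
    rw [← ofReal_integral_eq_lintegral_ofReal (hint.const_mul K)
      ((ae_restrict_iff' measurableSet_Ioo).mpr (ae_of_all _ fun t ht => by
        have := Real.rpow_nonneg ht.1.le (a-1)
        have := Real.rpow_nonneg (by linarith [ht.2] : (0:ℝ) ≤ x - t) (b-1)
        positivity))]
    rw [MeasureTheory.integral_const_mul, ← integral_Ioc_eq_integral_Ioo,
      ← intervalIntegral.integral_of_le hpos.le, realBetaScaled ha hb hpos,
      gammaPDF_of_nonneg hpos.le]
    congr 1
    rw [hK, Real.rpow_add hr]
    field_simp

lemma gammaPDF_one {r y : ℝ} (hy : 0 ≤ y) :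
    gammaPDF 1 r y = ENNReal.ofReal (r * Real.exp (-(r * y))) := by
  rw [gammaPDF_of_nonneg hy]
  norm_num [Real.Gamma_one, Real.rpow_one]

lemma lintegral_exp_tail {c : ℝ} (M : ℝ) (hc : 0 < c) :
    ∫⁻ t in Ici M, ENNReal.ofReal (Real.exp (-(c * t))) =
      ENNReal.ofReal (Real.exp (-(c * M)) / c) := by
  have base := exp_neg_integrableOn_Ioi M hc
  simp_rw [neg_mul] at base
  have hint : IntegrableOn (fun t => Real.exp (-(c * t))) (Ici M) volume := by
    rw [integrableOn_Ici_iff_integrableOn_Ioi]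
    exact base
  rw [← ofReal_integral_eq_lintegral_ofReal hint
    (ae_of_all _ fun t => (Real.exp_pos _).le)]
  congr 1
  rw [integral_Ici_eq_integral_Ioi]
  have := integral_comp_mul_left_Ioi (fun y => Real.exp (-y)) M hc
  simp only [smul_eq_mul] at this
  rw [this, integral_exp_neg_Ioi]
  field_simp

lemma lap_pointwise {r : ℝ} (hr : 0 < r) (x : ℝ) :
    ∫⁻ t, gammaPDF 1 r t * gammaPDF 1 r (-(x - t)) =
      ENNReal.ofReal (r / 2 * Real.exp (-(r * |x|))) := by
  set M := max x 0 with hM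
  have key : ∀ t : ℝ, gammaPDF 1 r t * gammaPDF 1 r (-(x - t)) =
      Set.indicator (Ici M) (fun t => ENNReal.ofReal
        (r ^ 2 * Real.exp (r * x) * Real.exp (-(2 * r * t)))) t := by
    intro t
    by_cases ht : t ∈ Ici M
    · have h1 : (0:ℝ) ≤ t := le_trans (le_max_right x 0) ht
      have h2 : (0:ℝ) ≤ -(x - t) := by
        have := le_trans (le_max_left x 0) ht
        linarith
      rw [Set.indicator_of_mem ht, gammaPDF_one h1, gammaPDF_one h2,
        ← ENNReal.ofReal_mul (by positivity)]
      congr 1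
      have hexp : Real.exp (-(r * t)) * Real.exp (-(r * -(x - t)))
          = Real.exp (r * x) * Real.exp (-(2 * r * t)) := by
        rw [← Real.exp_add, ← Real.exp_add]
        congr 1
        ring
      linear_combination r ^ 2 * hexp
    · rw [Set.indicator_of_notMem ht]
      rw [mem_Ici, not_le] at ht
      rcases lt_or_ge t 0 with h | h
      · rw [gammaPDF_of_neg h, zero_mul]
      · have htx : t < x := by
          rcases max_cases x 0 with ⟨h1, h2⟩ | ⟨h1, h2⟩ <;> rw [hM, h1] at ht <;> linarith
        rw [gammaPDF_of_neg (by simp only [neg_sub]; linarith : -(x - t) < 0), mul_zero]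
  simp_rw [key]
  rw [lintegral_indicator measurableSet_Ici]
  simp_rw [ENNReal.ofReal_mul (by positivity : (0:ℝ) ≤ r ^ 2 * Real.exp (r * x))]
  rw [lintegral_const_mul' _ _ ENNReal.ofReal_ne_top,
    show (fun t => ENNReal.ofReal (Real.exp (-(2 * r * t))))
      = fun t => ENNReal.ofReal (Real.exp (-(2 * r * t))) from rfl,
    lintegral_exp_tail M (by linarith : (0:ℝ) < 2 * r),
    ← ENNReal.ofReal_mul (by positivity)]
  congr 1
  rcases le_or_gt x 0 with hx | hx
  · rw [hM, max_eq_right hx, abs_of_nonpos hx]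
    rw [show -(2 * r * (0:ℝ)) = 0 by ring, Real.exp_zero, show -(r * -x) = r * x by ring]
    field_simp
  · rw [hM, max_eq_left hx.le, abs_of_pos hx]
    have hexp2 : Real.exp (r * x) * Real.exp (-(2 * r * x)) = Real.exp (-(r * x)) := by
      rw [← Real.exp_add]
      congr 1
      ring
    field_simp
    linear_combination (norm := ring_nf) hexp2

lemma measurable_gammaPDF (a r : ℝ) : Measurable (gammaPDF a r) :=
  (measurable_gammaPDFReal a r).ennreal_ofReal

lemma map_withDensity_aux {T S : ℝ → ℝ} (hT : MeasurePreserving T volume volume)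
    (hS : Measurable S) (hST : ∀ x, S (T x) = x) {g : ℝ → ℝ≥0∞} (hg : Measurable g) :
    Measure.map T (volume.withDensity g) = volume.withDensity (fun x => g (S x)) := by
  ext s hs
  rw [Measure.map_apply hT.measurable hs, withDensity_apply _ (hs.preimage hT.measurable),
    withDensity_apply _ hs, ← lintegral_indicator (hs.preimage hT.measurable) g,
    ← lintegral_indicator hs _,
    ← hT.lintegral_comp (Measurable.indicator (f := fun a => g (S a)) (hg.comp hS) hs)]
  congr 1
  ext u
  by_cases h : T u ∈ s
  · simp [Set.indicator_apply, h, hST]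
  · simp [Set.indicator_apply, h]

lemma gammaMeasure_conv {a b r : ℝ} (ha : 0 < a) (hb : 0 < b) (hr : 0 < r) :
    Measure.conv (gammaMeasure a r) (gammaMeasure b r) = gammaMeasure (a + b) r := by
  rw [gammaMeasure, gammaMeasure, gammaMeasure,
    conv_withDensity (measurable_gammaPDF a r) (measurable_gammaPDF b r)]
  apply withDensity_congr_ae
  have h0 : ∀ᵐ x : ℝ ∂volume, x ≠ 0 :=
    ae_iff.mpr (by simp [not_not, Set.setOf_eq_eq_singleton])
  filter_upwards [h0] with x hx
  exact gammaPDF_conv ha hb hr hx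

lemma law_sum {Ω ι : Type*} [MeasurableSpace Ω] {μ : Measure Ω} [IsProbabilityMeasure μ]
    {X : ι → Ω → ℝ} (hmeas : ∀ i, Measurable (X i))
    (hindep : iIndepFun X μ) {a r : ℝ} (ha : 0 < a) (hr : 0 < r)
    (hX : ∀ i, Measure.map (X i) μ = gammaMeasure a r) (s : Finset ι) (hs : s.Nonempty) :
    Measure.map (fun ω => ∑ i ∈ s, X i ω) μ = gammaMeasure (s.card * a) r := by
  induction hs using Finset.Nonempty.cons_induction with
  | singleton i => simpa using hX i
  | cons i s hi hs IH =>
    have hsum : Measurable (fun ω => ∑ j ∈ s, X j ω) := by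
      apply Finset.measurable_sum
      exact fun j _ => hmeas j
    have hindep2 : IndepFun (X i) (fun ω => ∑ j ∈ s, X j ω) μ := by
      have h := (iIndepFun.indepFun_finset_sum_of_notMem hindep hmeas hi).symm
      have : (∑ j ∈ s, X j) = fun ω => ∑ j ∈ s, X j ω := by
        funext ω; simp [Finset.sum_apply]
      rwa [this] at h
    have : (fun ω => ∑ j ∈ Finset.cons i s hi, X j ω)
        = fun ω => X i ω + ∑ j ∈ s, X j ω := by
      funext ω; rw [Finset.sum_cons]
    rw [this, map_add_of_indepFun (hmeas i) hsum hindep2, hX i, IH,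
      gammaMeasure_conv ha (by positivity) hr]
    congr 1
    rw [Finset.card_cons]
    push_cast
    ring

end DistributedNoisyAggregationAux

open DistributedNoisyAggregationAux

/-- Distributed noisy aggregation: each household `i` perturbs its fixed load `l i` with
Gamma noise `G (Sum.inl i) − G (Sum.inr i)` (shape `1/n`, scale `λ`, i.e. rate `1/λ`,
all `2n` noise variables mutually independent). The aggregate `∑ i, l̂ᵢ` then has a
Laplace distribution with scale `λ` shifted by `L = ∑ i, l i`, i.e. its law has density
`x ↦ (1/(2λ)) · exp (−|x − L|/λ)` with respect to Lebesgue measure. -/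
theorem distributed_noisy_aggregation
    {Ω : Type*} [MeasurableSpace Ω] (μ : Measure Ω) [IsProbabilityMeasure μ]
    (n : ℕ) (hn : 1 ≤ n) (lam : ℝ) (hlam : 0 < lam) (l : Fin n → ℝ)
    (G : (Fin n ⊕ Fin n) → Ω → ℝ) (hmeas : ∀ j, Measurable (G j))
    (hindep : iIndepFun G μ)
    (hG : ∀ j, Measure.map (G j) μ = gammaMeasure (1 / n) (1 / lam)) :
    Measure.map (fun ω => ∑ i : Fin n, (l i + G (Sum.inl i) ω - G (Sum.inr i) ω)) μ =
      volume.withDensity (fun x => ENNReal.ofReal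
        ((1 / (2 * lam)) * Real.exp (-|x - ∑ i, l i| / lam))) := by
  classical
  have hnpos : (0:ℝ) < n := by exact_mod_cast hn
  have hnR : (0:ℝ) < 1 / n := by positivity
  have hr : (0:ℝ) < 1 / lam := by positivity
  set r : ℝ := 1 / lam with hrdef
  set L : ℝ := ∑ i, l i with hL
  set S1 : Ω → ℝ := fun ω => ∑ i : Fin n, G (Sum.inl i) ω with hS1def
  set S2 : Ω → ℝ := fun ω => ∑ i : Fin n, G (Sum.inr i) ω with hS2def
  have hmS1 : Measurable S1 := Finset.measurable_sum _ (fun i _ => hmeas _)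
  have hmS2 : Measurable S2 := Finset.measurable_sum _ (fun i _ => hmeas _)
  have hne : (Finset.univ : Finset (Fin n)).Nonempty := ⟨⟨0, hn⟩, Finset.mem_univ _⟩
  set eL : Fin n ↪ (Fin n ⊕ Fin n) := ⟨Sum.inl, Sum.inl_injective⟩ with heL
  set eR : Fin n ↪ (Fin n ⊕ Fin n) := ⟨Sum.inr, Sum.inr_injective⟩ with heR
  have hcard : (((Finset.univ : Finset (Fin n)).map eL).card : ℝ) * (1 / n) = 1 := by
    rw [Finset.card_map, Finset.card_univ, Fintype.card_fin]
    field_simp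
  have hcard' : (((Finset.univ : Finset (Fin n)).map eR).card : ℝ) * (1 / n) = 1 := by
    rw [Finset.card_map, Finset.card_univ, Fintype.card_fin]
    field_simp
  have h1 : Measure.map S1 μ = gammaMeasure 1 r := by
    have h := law_sum hmeas hindep hnR hr hG ((Finset.univ : Finset (Fin n)).map eL)
      (hne.map)
    rw [hcard] at h
    simp only [Finset.sum_map, heL, Function.Embedding.coeFn_mk] at h
    exact h
  have h2 : Measure.map S2 μ = gammaMeasure 1 r := by
    have h := law_sum hmeas hindep hnR hr hG ((Finset.univ : Finset (Fin n)).map eR)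
      (hne.map)
    rw [hcard'] at h
    simp only [Finset.sum_map, heR, Function.Embedding.coeFn_mk] at h
    exact h
  have hSS : IndepFun S1 S2 μ := by
    have hdisj : Disjoint ((Finset.univ : Finset (Fin n)).map eL)
        ((Finset.univ : Finset (Fin n)).map eR) := by
      simp [Finset.disjoint_left, heL, heR]
    have h := hindep.indepFun_finset _ _ hdisj hmeas
    have hφ : Measurable (fun v : (((Finset.univ : Finset (Fin n)).map eL) → ℝ) =>
        ∑ i, v i) := Finset.measurable_sum _ (fun i _ => measurable_pi_apply i)
    have hψ : Measurable (fun v : (((Finset.univ : Finset (Fin n)).map eR) → ℝ) =>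
        ∑ i, v i) := Finset.measurable_sum _ (fun i _ => measurable_pi_apply i)
    have h' := h.comp hφ hψ
    have e1 : ((fun v : (((Finset.univ : Finset (Fin n)).map eL) → ℝ) => ∑ i, v i)
        ∘ (fun a (i : ((Finset.univ : Finset (Fin n)).map eL)) => G i a)) = S1 := by
      funext a
      simp only [Function.comp_apply, hS1def]
      rw [Finset.sum_coe_sort _ (fun j => G j a), Finset.sum_map]
      rfl
    have e2 : ((fun v : (((Finset.univ : Finset (Fin n)).map eR) → ℝ) => ∑ i, v i)
        ∘ (fun a (i : ((Finset.univ : Finset (Fin n)).map eR)) => G i a)) = S2 := by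
      funext a
      simp only [Function.comp_apply, hS2def]
      rw [Finset.sum_coe_sort _ (fun j => G j a), Finset.sum_map]
      rfl
    rwa [e1, e2] at h'
  have hneg : Measure.map (fun ω => -(S2 ω)) μ
      = volume.withDensity (fun x => gammaPDF 1 r (-x)) := by
    rw [show (fun ω => -(S2 ω)) = (fun x : ℝ => -x) ∘ S2 from rfl,
      ← Measure.map_map measurable_neg hmS2, h2, gammaMeasure]
    exact map_withDensity_aux (Measure.measurePreserving_neg volume) measurable_neg
      (fun x => by simp) (measurable_gammaPDF 1 r)
  have hdiff : Measure.map (fun ω => S1 ω - S2 ω) μ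
      = volume.withDensity (fun x => ENNReal.ofReal (r / 2 * Real.exp (-(r * |x|)))) := by
    have hfun : (fun ω => S1 ω - S2 ω) = fun ω => S1 ω + (-(S2 ω)) := by
      funext ω; ring
    rw [hfun, map_add_of_indepFun (Y := fun ω => -(S2 ω)) hmS1 hmS2.neg (hSS.comp measurable_id measurable_neg),
      h1, hneg, gammaMeasure, conv_withDensity (f := gammaPDF 1 r)
        (g := fun x => gammaPDF 1 r (-x)) (measurable_gammaPDF 1 r)
        (by exact (measurable_gammaPDF 1 r).comp measurable_neg)]
    congr 1
    funext x
    exact lap_pointwise hr x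
  have hfun2 : (fun ω => ∑ i : Fin n, (l i + G (Sum.inl i) ω - G (Sum.inr i) ω))
      = (fun z : ℝ => L + z) ∘ (fun ω => S1 ω - S2 ω) := by
    funext ω
    simp only [Function.comp_apply, hS1def, hS2def, hL,
      Finset.sum_sub_distrib, Finset.sum_add_distrib]
    ring
  have hlapmeas : Measurable (fun x : ℝ => ENNReal.ofReal (r / 2 * Real.exp (-(r * |x|)))) :=
    Measurable.ennreal_ofReal (by fun_prop)
  rw [hfun2, ← Measure.map_map (f := fun ω => S1 ω - S2 ω) (measurable_const_add L) (hmS1.sub hmS2), hdiff,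
    map_withDensity_aux (T := fun x => L + x) (S := fun x => x - L)
      (measurePreserving_add_left volume L)
      (by fun_prop) (fun x => by ring) hlapmeas]
  congr 1
  funext x
  rw [show r / 2 = 1 / (2 * lam) from by rw [hrdef]; ring,
    show -(r * |x - L|) = -|x - L| / lam from by rw [hrdef]; ring]
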